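/- Let R be a commutative ring, n ≥ 1 a natural number, and x, y ∈ R. Then det T_n(x,y) = x + y. -/

import Mathlib

open Matrix

/-- The matrix `T_n(x,y)` of size `2n+1`: the tridiagonal path matrix with `1`s on the
off-diagonals, `y` in the upper-right corner and `x` in the lower-left corner. -/
def Tmat (R : Type*) [CommRing R] (n : ℕ) (x y : R) :
    Matrix (Fin (2*n+1)) (Fin (2*n+1)) R :=
  Matrix.of fun i j =>
    if i.val + 1 = j.val ∨ j.val + 1 = i.val then 1
    else if i.val = 0 ∧ j.val = 2*n then y
    else if i.val = 2*n ∧ j.val = 0 then x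
    else 0

lemma my_val_add_one (n : ℕ) (i : Fin (2*n+1)) :
    ((i + 1 : Fin (2*n+1))).val = if i.val = 2*n then 0 else i.val + 1 := by
  rw [Fin.val_add_one]
  simp [Fin.ext_iff]

lemma my_val_sub_one (n : ℕ) (i : Fin (2*n+1)) :
    ((i - 1 : Fin (2*n+1))).val = if i.val = 0 then 2*n else i.val - 1 := by
  rw [Fin.coe_sub_one]
  simp only [Fin.ext_iff, Fin.val_zero]

lemma Tmat_eq_zero (R : Type*) [CommRing R] (n : ℕ) (x y : R)
    (row col : Fin (2*n+1)) (h1 : row ≠ col + 1) (h2 : row ≠ col - 1) :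
    Tmat R n x y row col = 0 := by
  have hr := row.is_lt
  have hc := col.is_lt
  have h1v : row.val ≠ (if col.val = 2*n then 0 else col.val + 1) := by
    rw [← my_val_add_one]; exact fun he => h1 (Fin.ext he)
  have h2v : row.val ≠ (if col.val = 0 then 2*n else col.val - 1) := by
    rw [← my_val_sub_one]; exact fun he => h2 (Fin.ext he)
  simp only [Tmat, of_apply]
  split_ifs with hA hB hC
  · exfalso; split_ifs at h1v h2v <;> omega
  · exfalso; split_ifs at h1v h2v <;> omega
  · exfalso; split_ifs at h1v h2v <;> omega
  · rfl

lemma rot_char (n : ℕ) (hn : 1 ≤ n) (σ : Equiv.Perm (Fin (2*n+1)))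
    (h : ∀ i, σ i = i + 1 ∨ σ i = i - 1) :
    σ = finRotate (2*n+1) ∨ σ = (finRotate (2*n+1))⁻¹ := by
  have hzero : ((2*n+1 : ℕ) : ZMod (2*n+1)) = 0 := ZMod.natCast_self _
  -- the sum of displacements is 0 in ZMod (2n+1)
  have hsum : ∑ i : Fin (2*n+1),
      (((σ i).val : ZMod (2*n+1)) - (i.val : ZMod (2*n+1))) = 0 := by
    rw [Finset.sum_sub_distrib]
    rw [Equiv.sum_comp σ (fun i : Fin (2*n+1) => ((i.val : ZMod (2*n+1))))]
    exact sub_self _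
  have hterm : ∀ i : Fin (2*n+1), ((σ i).val : ZMod (2*n+1)) - (i.val : ZMod (2*n+1))
      = if σ i = i + 1 then 1 else -1 := by
    intro i
    have hi := i.is_lt
    rcases h i with h' | h'
    · rw [if_pos h', h', my_val_add_one]
      by_cases h2 : i.val = 2*n
      · rw [if_pos h2, h2]
        push_cast at hzero ⊢
        linear_combination -hzero
      · rw [if_neg h2]
        push_cast
        ring
    · have hne : σ i ≠ i + 1 := by
        intro hcon
        have e1 : ((i - 1 : Fin (2*n+1))).val = ((i + 1 : Fin (2*n+1))).val := by
          rw [← h', ← hcon]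
        rw [my_val_add_one, my_val_sub_one] at e1
        split_ifs at e1 <;> omega
      rw [if_neg hne, h', my_val_sub_one]
      by_cases h0 : i.val = 0
      · rw [if_pos h0, h0]
        push_cast at hzero ⊢
        linear_combination hzero
      · rw [if_neg h0]
        rw [Nat.cast_sub (by omega : 1 ≤ i.val)]
        push_cast
        ring
  have h2 : ∑ i : Fin (2*n+1), (if σ i = i + 1 then (1 : ZMod (2*n+1)) else -1) = 0 := by
    rw [← hsum]; exact Finset.sum_congr rfl fun i _ => (hterm i).symm
  rw [Finset.sum_ite, Finset.sum_const, Finset.sum_const] at h2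
  have hcards : (Finset.univ.filter fun i : Fin (2*n+1) => σ i = i + 1).card
      + (Finset.univ.filter fun i : Fin (2*n+1) => ¬(σ i = i + 1)).card = 2*n+1 := by
    rw [Finset.card_filter_add_card_filter_not]
    simp
  have h3 : ((2 * (Finset.univ.filter fun i : Fin (2*n+1) => σ i = i + 1).card : ℕ)
      : ZMod (2*n+1)) = 0 := by
    have hrw : (Finset.univ.filter fun i : Fin (2*n+1) => ¬(σ i = i + 1)).card
        = 2*n+1 - (Finset.univ.filter fun i : Fin (2*n+1) => σ i = i + 1).card := by omega
    rw [hrw] at h2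
    rw [smul_neg, ← sub_eq_add_neg, nsmul_eq_mul, nsmul_eq_mul, mul_one, mul_one] at h2
    rw [Nat.cast_sub (by omega), hzero] at h2
    push_cast at h2 ⊢
    linear_combination h2
  rw [ZMod.natCast_eq_zero_iff] at h3
  obtain ⟨c, hc⟩ := h3
  have hk0m : (Finset.univ.filter fun i : Fin (2*n+1) => σ i = i + 1).card = 0
      ∨ (Finset.univ.filter fun i : Fin (2*n+1) => σ i = i + 1).card = 2*n+1 := by
    have hc2 : c = 0 ∨ c = 1 ∨ 2 ≤ c := by omega
    rcases hc2 with hc2 | hc2 | hc2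
    · left; rw [hc2] at hc; omega
    · exfalso; rw [hc2] at hc; omega
    · right
      have h5 : (2*n+1) * 2 ≤ (2*n+1) * c := Nat.mul_le_mul_left _ hc2
      omega
  rcases hk0m with hk0 | hkm
  · -- all moves are i ↦ i - 1, so σ = (finRotate (2n+1))⁻¹
    right
    have hall : ∀ i : Fin (2*n+1), σ i = i - 1 := by
      intro i
      rcases h i with h' | h'
      · exfalso
        have hmem : i ∈ Finset.univ.filter fun i : Fin (2*n+1) => σ i = i + 1 := by
          simp [h']
        rw [Finset.card_eq_zero.mp hk0] at hmem
        exact absurd hmem (Finset.notMem_empty i)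
      · exact h'
    have hone : finRotate (2*n+1) * σ = 1 := by
      apply Equiv.ext
      intro i
      simp only [Equiv.Perm.mul_apply, hall i, Equiv.Perm.one_apply, finRotate_succ_apply]
      exact sub_add_cancel i 1
    exact eq_inv_of_mul_eq_one_right hone
  · -- all moves are i ↦ i + 1, so σ = finRotate (2n+1)
    left
    have huniv : (Finset.univ.filter fun i : Fin (2*n+1) => σ i = i + 1) = Finset.univ := by
      apply Finset.eq_univ_of_card
      rw [hkm]; simp
    apply Equiv.ext
    intro i
    have hmem : i ∈ Finset.univ.filter fun i : Fin (2*n+1) => σ i = i + 1 := by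
      rw [huniv]; exact Finset.mem_univ i
    rw [Finset.mem_filter] at hmem
    rw [hmem.2, finRotate_succ_apply]

theorem det_Tmat (R : Type*) [CommRing R] (n : ℕ) (hn : 1 ≤ n) (x y : R) :
    (Tmat R n x y).det = x + y := by
  classical
  have hrinv : ∀ i : Fin (2*n+1), (finRotate (2*n+1))⁻¹ i = i - 1 := by
    intro i
    rw [Equiv.Perm.inv_eq_iff_eq, finRotate_succ_apply, sub_add_cancel]
  have hrne : finRotate (2*n+1) ≠ (finRotate (2*n+1))⁻¹ := by
    intro hEq
    have h1 : (finRotate (2*n+1) (0 : Fin (2*n+1))).val = 1 := by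
      rw [finRotate_succ_apply, my_val_add_one]
      simp
      omega
    have h2 : (finRotate (2*n+1) (0 : Fin (2*n+1))).val = 2*n := by
      rw [hEq, hrinv, my_val_sub_one]
      simp
    omega
  rw [det_apply]
  rw [← Finset.sum_subset (Finset.subset_univ
      ({finRotate (2*n+1), (finRotate (2*n+1))⁻¹} : Finset (Equiv.Perm (Fin (2*n+1)))))]
  · rw [Finset.sum_pair hrne]
    have hsign : Equiv.Perm.sign (finRotate (2*n+1)) = 1 := by
      rw [sign_finRotate, Nat.add_sub_cancel, pow_mul]
      norm_num
    have hsigninv : Equiv.Perm.sign (finRotate (2*n+1))⁻¹ = 1 := by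
      rw [map_inv, hsign, inv_one]
    have hprod1 : ∏ i, Tmat R n x y (finRotate (2*n+1) i) i = y := by
      have hlast : Fin.last (2*n) ∈ Finset.univ := Finset.mem_univ _
      rw [Finset.prod_eq_single (Fin.last (2*n))
        (fun b _ hb => ?_) (fun hmem => absurd hlast hmem)]
      · -- the remaining factor is y
        have hcol : (Fin.last (2*n)).val = 2*n := Fin.val_last _
        have hval : (finRotate (2*n+1) (Fin.last (2*n))).val = 0 := by
          rw [finRotate_succ_apply, my_val_add_one, if_pos hcol]
        simp only [Tmat, of_apply]
        rw [if_neg (by omega), if_pos (by omega)]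
      · -- other factors are 1
        have hbv : b.val < 2*n := by
          have h1 := b.is_lt
          rcases Nat.lt_or_ge b.val (2*n) with h | h
          · exact h
          · exact absurd (Fin.ext (by rw [Fin.val_last]; omega)) hb
        have hval : (finRotate (2*n+1) b).val = b.val + 1 := by
          rw [finRotate_succ_apply, my_val_add_one, if_neg (by omega)]
        simp only [Tmat, of_apply]
        rw [if_pos (Or.inr hval.symm)]
    have hprod2 : ∏ i, Tmat R n x y ((finRotate (2*n+1))⁻¹ i) i = x := by
      have h0 : (0 : Fin (2*n+1)) ∈ Finset.univ := Finset.mem_univ _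
      rw [Finset.prod_eq_single (0 : Fin (2*n+1))
        (fun b _ hb => ?_) (fun hmem => absurd h0 hmem)]
      · have hval : ((finRotate (2*n+1))⁻¹ (0 : Fin (2*n+1))).val = 2*n := by
          rw [hrinv, my_val_sub_one]
          simp
        have hcol : (0 : Fin (2*n+1)).val = 0 := rfl
        simp only [Tmat, of_apply]
        rw [if_neg (by omega), if_neg (by omega), if_pos (by omega)]
      · have hbv : 0 < b.val := by
          rcases Nat.eq_zero_or_pos b.val with h | h
          · exact absurd (Fin.ext (by simpa using h)) hb
          · exact h
        have hval : ((finRotate (2*n+1))⁻¹ b).val = b.val - 1 := by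
          rw [hrinv, my_val_sub_one, if_neg (by omega)]
        simp only [Tmat, of_apply]
        rw [if_pos (Or.inl (by omega : ((finRotate (2*n+1))⁻¹ b).val + 1 = b.val))]
    rw [hsign, hsigninv, hprod1, hprod2, one_smul, one_smul]
    ring
  · intro σ _ hσ
    have hnot : ¬ ∀ i, σ i = i + 1 ∨ σ i = i - 1 := by
      intro hall
      rcases rot_char n hn σ hall with h | h <;> simp [h] at hσ
    rw [not_forall] at hnot
    obtain ⟨i, hi⟩ := hnot
    push_neg at hi
    have hz : Tmat R n x y (σ i) i = 0 := Tmat_eq_zero R n x y _ _ hi.1 hi.2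
    rw [Finset.prod_eq_zero (f := fun j => Tmat R n x y (σ j) j) (Finset.mem_univ i) hz,
      smul_zero]
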